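/- Let f : (a,b) → ℝ be n times differentiable with n ≥ 1, and suppose |f⁽ⁿ⁾(x)| ≥ λ > 0 for all x ∈ (a,b). Then the Lebesgue measure of the sublevel set {x ∈ (a,b) : |f(x)| ≤ α} is at most (n! · 2^(2n-1))^(1/n) · (α/λ)^(1/n). -/

import Mathlib

open Polynomial Polynomial.Chebyshev Finset MeasureTheory Set Real

lemma SLE.coeff_basis {N : ℕ} (v : Fin (N + 1) → ℝ) (hv : Function.Injective v) (i : Fin (N + 1)) :
    (Lagrange.basis Finset.univ v i).coeff N = (∏ j ∈ Finset.univ.erase i, (v i - v j))⁻¹ := by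
  have hinj : Set.InjOn v (Finset.univ : Finset (Fin (N+1))) := hv.injOn
  have hdeg : (Lagrange.basis Finset.univ v i).natDegree = N := by
    rw [Lagrange.natDegree_basis hinj (Finset.mem_univ i)]
    simp
  have : (Lagrange.basis Finset.univ v i).coeff N = (Lagrange.basis Finset.univ v i).leadingCoeff := by
    rw [Polynomial.leadingCoeff, hdeg]
  rw [this, Lagrange.basis, Polynomial.leadingCoeff_prod]
  rw [← Finset.prod_inv_distrib]
  refine Finset.prod_congr rfl fun j hj => ?_
  have hne : v i ≠ v j := fun h => (Finset.mem_erase.mp hj).1.symm (hv h)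
  rw [Lagrange.basisDivisor]
  rw [Polynomial.leadingCoeff_mul, Polynomial.leadingCoeff_C]
  simp [Polynomial.leadingCoeff_X_sub_C]

lemma SLE.coeff_interpolate {N : ℕ} (v : Fin (N + 1) → ℝ) (hv : Function.Injective v)
    (r : Fin (N + 1) → ℝ) :
    (Lagrange.interpolate Finset.univ v r).coeff N
      = ∑ i, r i * (∏ j ∈ Finset.univ.erase i, (v i - v j))⁻¹ := by
  rw [Lagrange.interpolate_apply, Polynomial.finset_sum_coeff]
  refine Finset.sum_congr rfl fun i _ => ?_
  rw [Polynomial.coeff_C_mul, SLE.coeff_basis v hv i]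

lemma SLE.divDiff_poly {N : ℕ} (v : Fin (N + 1) → ℝ) (hv : Function.Injective v)
    (P : Polynomial ℝ) (hP : P.degree < (N + 1 : ℕ)) :
    ∑ i, P.eval (v i) * (∏ j ∈ Finset.univ.erase i, (v i - v j))⁻¹ = P.coeff N := by
  have hinj : Set.InjOn v (Finset.univ : Finset (Fin (N+1))) := hv.injOn
  have hP' : P.degree < (Finset.univ : Finset (Fin (N+1))).card := by simpa using hP
  conv_rhs => rw [Lagrange.eq_interpolate hinj hP']
  rw [SLE.coeff_interpolate v hv]



lemma SLE.iterate_derivative_eval {N : ℕ} (P : Polynomial ℝ) (hP : P.natDegree ≤ N) (t : ℝ) :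
    (derivative^[N] P).eval t = (N.factorial : ℝ) * P.coeff N := by
  have h0 : (derivative^[N] P).natDegree ≤ 0 := by
    have := Polynomial.natDegree_iterate_derivative P N
    omega
  rw [Polynomial.eq_C_of_natDegree_le_zero h0, Polynomial.eval_C,
    Polynomial.coeff_iterate_derivative, nsmul_eq_mul]
  norm_num [Nat.descFactorial_self]

lemma SLE.T_key : ∀ N : ℕ, (T ℝ (N : ℤ)).natDegree ≤ N ∧
      (T ℝ ((N : ℤ)+1)).natDegree ≤ N+1 ∧
      (T ℝ (N : ℤ)).coeff N = (if N = 0 then 1 else 2 ^ (N - 1)) ∧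
      (T ℝ ((N : ℤ)+1)).coeff (N+1) = 2 ^ N := by
  intro N
  induction N with
  | zero =>
    refine ⟨by simp [T_zero], by simp [T_one], by simp [T_zero], by simp [T_one]⟩
  | succ N ih =>
    obtain ⟨h1, h2, h3, h4⟩ := ih
    have hcast : ((N+1 : ℕ) : ℤ) = (N : ℤ) + 1 := by push_cast; ring
    have hcast2 : (N : ℤ) + 1 + 1 = (N : ℤ) + 2 := by ring
    have hrec : T ℝ ((N : ℤ) + 2) = 2 * X * T ℝ ((N : ℤ) + 1) - T ℝ (N : ℤ) :=
      T_add_two ℝ (N : ℤ)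
    have hX : (2 * X * T ℝ ((N : ℤ) + 1)) = Polynomial.C 2 * (X * T ℝ ((N : ℤ) + 1)) := by
      rw [map_ofNat Polynomial.C 2]; ring
    have hdeg2 : (T ℝ ((N : ℤ) + 2)).natDegree ≤ N + 2 := by
      rw [hrec]
      refine le_trans (Polynomial.natDegree_sub_le _ _) ?_
      simp only [max_le_iff]
      refine ⟨?_, by omega⟩
      rw [hX]
      have a1 := Polynomial.natDegree_mul_le (p := Polynomial.C (2:ℝ))
        (q := X * T ℝ ((N : ℤ) + 1))
      have a2 := Polynomial.natDegree_mul_le (p := (X : ℝ[X])) (q := T ℝ ((N : ℤ) + 1))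
      have a3 : (Polynomial.C (2:ℝ)).natDegree = 0 := Polynomial.natDegree_C _
      have a4 : (X : ℝ[X]).natDegree ≤ 1 := Polynomial.natDegree_X_le
      omega
    have hco2 : (T ℝ ((N : ℤ) + 2)).coeff (N+2) = 2 ^ (N+1) := by
      rw [hrec, Polynomial.coeff_sub]
      have hz : (T ℝ (N : ℤ)).coeff (N+2) = 0 :=
        Polynomial.coeff_eq_zero_of_natDegree_lt (by omega)
      rw [hX, Polynomial.coeff_C_mul, Polynomial.coeff_X_mul, h4, hz]
      ring
    refine ⟨hcast ▸ h2, ?_, ?_, ?_⟩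
    · rw [hcast, hcast2]; exact hdeg2
    · rw [hcast]; simp only [Nat.succ_ne_zero, if_false, Nat.add_sub_cancel]; exact h4
    · rw [hcast, hcast2]; exact hco2

lemma SLE.T_natDegree {N : ℕ} (hN : 1 ≤ N) : (T ℝ (N : ℤ)).natDegree = N := by
  obtain ⟨h1, _, h3, _⟩ := SLE.T_key N
  refine le_antisymm h1 (Polynomial.le_natDegree_of_ne_zero ?_)
  rw [h3]
  have : N ≠ 0 := by omega
  simp only [this, if_false]
  positivity

lemma SLE.T_leadingCoeff {N : ℕ} (hN : 1 ≤ N) : (T ℝ (N : ℤ)).leadingCoeff = 2 ^ (N-1) := by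
  rw [Polynomial.leadingCoeff, SLE.T_natDegree hN, (SLE.T_key N).2.2.1]
  have : N ≠ 0 := by omega
  simp [this]

noncomputable def SLE.Q (n : ℕ) : Polynomial ℝ :=
  (T ℝ (n : ℤ)).comp (Polynomial.C 2 * Polynomial.X + Polynomial.C (-1))

noncomputable def SLE.cheb (n : ℕ) (i : Fin (n+1)) : ℝ := (1 - Real.cos (i * π / n)) / 2

lemma SLE.q_natDegree : (Polynomial.C (2:ℝ) * Polynomial.X + Polynomial.C (-1)).natDegree = 1 :=
  Polynomial.natDegree_linear (two_ne_zero)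

lemma SLE.Q_natDegree {n : ℕ} (hn : 1 ≤ n) : (SLE.Q n).natDegree = n := by
  rw [SLE.Q, Polynomial.natDegree_comp, SLE.T_natDegree hn, SLE.q_natDegree, mul_one]

lemma SLE.Q_coeff {n : ℕ} (hn : 1 ≤ n) : (SLE.Q n).coeff n = 2 ^ (2*n - 1) := by
  have h1 : (SLE.Q n).coeff n = (SLE.Q n).leadingCoeff := by
    rw [Polynomial.leadingCoeff, SLE.Q_natDegree hn]
  rw [h1, SLE.Q, Polynomial.leadingCoeff_comp (by rw [SLE.q_natDegree]; omega),
    SLE.T_leadingCoeff hn, SLE.T_natDegree hn, Polynomial.leadingCoeff_linear two_ne_zero]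
  rw [← pow_add]
  congr 1
  omega

lemma SLE.Q_eval {n : ℕ} (x : ℝ) : (SLE.Q n).eval x = (T ℝ (n : ℤ)).eval (2*x - 1) := by
  rw [SLE.Q, Polynomial.eval_comp]
  congr 1
  simp
  ring

lemma SLE.Q_eval_cheb {n : ℕ} (hn : 1 ≤ n) (i : Fin (n+1)) :
    (SLE.Q n).eval (SLE.cheb n i) = (-1) ^ (n - (i:ℕ)) := by
  rw [SLE.Q_eval, SLE.cheb]
  have hn0 : (n:ℝ) ≠ 0 := by positivity
  have h1 : 2 * ((1 - Real.cos (i * π / n)) / 2) - 1 = Real.cos (π - i * π / n) := by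
    rw [Real.cos_pi_sub]; ring
  rw [h1, T_real_cos]
  have h2 : (((n:ℤ)):ℝ) * (π - i * π / n) = ((n - (i:ℕ) : ℕ):ℝ) * π - 0 := by
    have hle : (i : ℕ) ≤ n := by omega
    push_cast [hle]
    field_simp
    ring
  rw [h2, Real.cos_nat_mul_pi_sub]
  simp

lemma SLE.cheb_strictMono {n : ℕ} (hn : 1 ≤ n) : StrictMono (SLE.cheb n) := by
  intro i j hij
  have hn0 : (0:ℝ) < n := by positivity
  have hmem : ∀ k : Fin (n+1), (k * π / n : ℝ) ∈ Set.Icc 0 π := by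
    intro k
    constructor
    · positivity
    · rw [div_le_iff₀ hn0]
      have : (k:ℝ) ≤ n := by
        have := k.isLt
        exact_mod_cast Nat.lt_succ_iff.mp this
      nlinarith [Real.pi_pos]
  have hcos : Real.cos (j * π / n) < Real.cos (i * π / n) := by
    refine Real.strictAntiOn_cos (hmem i) (hmem j) ?_
    have h : (i:ℝ) < j := by exact_mod_cast hij
    rw [div_lt_div_iff_of_pos_right hn0]
    nlinarith [Real.pi_pos]
  unfold SLE.cheb
  linarith

lemma SLE.cheb_mem {n : ℕ} (i : Fin (n+1)) :
    SLE.cheb n i ∈ Set.Icc (0:ℝ) 1 := by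
  unfold SLE.cheb
  have := Real.neg_one_le_cos ((i:ℝ) * π / n)
  have := Real.cos_le_one ((i:ℝ) * π / n)
  constructor <;> nlinarith

lemma SLE.cheb_zero (n : ℕ) : SLE.cheb n 0 = 0 := by
  unfold SLE.cheb; norm_num

lemma SLE.cheb_last {n : ℕ} (hn : 1 ≤ n) : SLE.cheb n (Fin.last n) = 1 := by
  unfold SLE.cheb
  have hn0 : (n:ℝ) ≠ 0 := by positivity
  have h : ((Fin.last n : Fin (n+1)):ℝ) * π / n = π := by
    rw [Fin.val_last]
    field_simp
  rw [h, Real.cos_pi]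
  norm_num

lemma SLE.erase_eq {n : ℕ} (i : Fin (n+1)) :
    (Finset.univ.erase i) = Finset.Iio i ∪ Finset.Ioi i := by
  ext j
  simp only [Finset.mem_erase, Finset.mem_univ, and_true, Finset.mem_union, Finset.mem_Iio,
    Finset.mem_Ioi]
  exact ne_iff_lt_or_gt

lemma SLE.prod_sign {n : ℕ} (x : Fin (n+1) → ℝ) (hx : StrictMono x) (i : Fin (n+1)) :
    ∏ j ∈ Finset.univ.erase i, (x i - x j)
      = (-1) ^ (n - (i:ℕ)) * ∏ j ∈ Finset.univ.erase i, |x i - x j| := by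
  have hdisj : Disjoint (Finset.Iio i) (Finset.Ioi i) := by
    simp [Finset.disjoint_left]
    intro j hj
    exact le_of_lt hj
  rw [SLE.erase_eq, Finset.prod_union hdisj, Finset.prod_union hdisj]
  have hIio : ∀ j ∈ Finset.Iio i, x i - x j = |x i - x j| := by
    intro j hj
    rw [abs_of_pos (by simp at hj; linarith [hx hj])]
  have hIoi : ∀ j ∈ Finset.Ioi i, x i - x j = -1 * |x i - x j| := by
    intro j hj
    simp only [Finset.mem_Ioi] at hj
    rw [abs_of_neg (by linarith [hx hj])]
    ring
  rw [Finset.prod_congr rfl hIio, Finset.prod_congr rfl hIoi, Finset.prod_mul_distrib,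
    Finset.prod_const, Fin.card_Ioi]
  rw [show n + 1 - 1 - (i:ℕ) = n - (i:ℕ) from by omega]
  ring

lemma SLE.prod_abs_pos {n : ℕ} (x : Fin (n+1) → ℝ) (hx : StrictMono x) (i : Fin (n+1)) :
    0 < ∏ j ∈ Finset.univ.erase i, |x i - x j| := by
  refine Finset.prod_pos fun j hj => ?_
  have : x i ≠ x j := fun h => (Finset.mem_erase.mp hj).1.symm (hx.injective h)
  exact abs_pos.mpr (sub_ne_zero.mpr this)

lemma SLE.cheb_sum {n : ℕ} (hn : 1 ≤ n) :
    ∑ i, (∏ j ∈ Finset.univ.erase i, |SLE.cheb n i - SLE.cheb n j|)⁻¹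
      = 2 ^ (2*n - 1) := by
  have hmono := SLE.cheb_strictMono (n := n) hn
  have hdeg : (SLE.Q n).degree < ((n + 1 : ℕ) : WithBot ℕ) := by
    refine lt_of_le_of_lt Polynomial.degree_le_natDegree ?_
    rw [SLE.Q_natDegree hn]
    exact_mod_cast Nat.lt_succ_self n
  have key := SLE.divDiff_poly (SLE.cheb n) hmono.injective (SLE.Q n) hdeg
  rw [SLE.Q_coeff hn] at key
  rw [← key]
  refine Finset.sum_congr rfl fun i _ => ?_
  rw [SLE.Q_eval_cheb hn i, SLE.prod_sign _ hmono i, mul_inv]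
  have h1 : ((-1 : ℝ) ^ (n - (i:ℕ)))⁻¹ = (-1) ^ (n - (i:ℕ)) := by
    rcases Nat.even_or_odd (n - (i:ℕ)) with h | h
    · simp [h.neg_one_pow]
    · simp [h.neg_one_pow]
  rw [h1, ← mul_assoc, ← pow_add]
  rw [Even.neg_one_pow ⟨n - (i:ℕ), by ring⟩, one_mul]

lemma SLE.rolle_step {a b : ℝ} (h h' : ℝ → ℝ)
    (hder : ∀ t ∈ Set.Ioo a b, HasDerivAt h (h' t) t) (u v : ℝ)
    (hu : u ∈ Set.Ioo a b) (hv : v ∈ Set.Ioo a b) (huv : u < v)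
    (h0 : h u = 0) (h1 : h v = 0) : ∃ c ∈ Set.Ioo u v, h' c = 0 := by
  have hsub : Set.Icc u v ⊆ Set.Ioo a b := fun t ht =>
    ⟨lt_of_lt_of_le hu.1 ht.1, lt_of_le_of_lt ht.2 hv.2⟩
  have hcont : ContinuousOn h (Set.Icc u v) := fun t ht =>
    ((hder t (hsub ht)).differentiableAt.continuousAt).continuousWithinAt
  exact exists_hasDerivAt_eq_zero huv hcont (h0.trans h1.symm)
    (fun t ht => hder t (hsub (Set.mem_Icc_of_Ioo ht)))

lemma SLE.rolle_chain {a b : ℝ} (g : ℕ → ℝ → ℝ) :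
    ∀ d k : ℕ, (∀ m < d, ∀ t ∈ Set.Ioo a b, HasDerivAt (g (k+m)) (g (k+m+1) t) t) →
    ∀ y : Fin (d+1) → ℝ, StrictMono y → (∀ i, y i ∈ Set.Ioo a b) →
    (∀ i, g k (y i) = 0) → ∃ ξ ∈ Set.Ioo a b, g (k+d) ξ = 0 := by
  intro d
  induction d with
  | zero => exact fun k _ y _ hmem hz => ⟨y 0, hmem 0, hz 0⟩
  | succ d ih =>
    intro k hder y hy hmem hz
    have hstep : ∀ i : Fin (d+1), ∃ c ∈ Set.Ioo (y i.castSucc) (y i.succ), g (k+1) c = 0 := by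
      intro i
      refine SLE.rolle_step (g k) (g (k+1))
        (fun t ht => by simpa using hder 0 (by omega) t ht) _ _
        (hmem i.castSucc) (hmem i.succ) (hy (Fin.castSucc_lt_succ (i := i)))
        (hz i.castSucc) (hz i.succ)
    choose c hc1 hc2 using hstep
    have hcmono : StrictMono c := by
      intro i j hij
      have h1 : c i < y i.succ := (hc1 i).2
      have h2 : y j.castSucc < c j := (hc1 j).1
      have h3 : y i.succ ≤ y j.castSucc := by
        refine hy.le_iff_le.mpr ?_
        rw [Fin.le_def]
        simp only [Fin.val_succ, Fin.coe_castSucc]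
        exact hij
      linarith
    have hcmem : ∀ i, c i ∈ Set.Ioo a b := fun i =>
      ⟨lt_trans (hmem i.castSucc).1 (hc1 i).1, lt_trans (hc1 i).2 (hmem i.succ).2⟩
    have := ih (k+1) (fun m hm t ht => by
      have h := hder (m+1) (by omega) t ht
      have e1 : k + (m+1) = k + 1 + m := by omega
      rw [e1] at h
      exact h) c hcmono hcmem hc2
    obtain ⟨ξ, hξ, hgξ⟩ := this
    refine ⟨ξ, hξ, ?_⟩
    rw [show k+(d+1) = k+1+d from by omega]
    exact hgξ

lemma SLE.divDiff_MVT (a b : ℝ) (n : ℕ) (f : ℝ → ℝ)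
    (hd : ∀ k < n, DifferentiableOn ℝ (iteratedDerivWithin k f (Set.Ioo a b)) (Set.Ioo a b))
    (x : Fin (n+1) → ℝ) (hx : StrictMono x) (hmem : ∀ i, x i ∈ Set.Ioo a b) :
    ∃ ξ ∈ Set.Ioo a b, iteratedDerivWithin n f (Set.Ioo a b) ξ
      = (n.factorial : ℝ) * ∑ i, f (x i) * (∏ j ∈ Finset.univ.erase i, (x i - x j))⁻¹ := by
  set s := Set.Ioo a b with hs
  have hopen : IsOpen s := isOpen_Ioo
  set P := Lagrange.interpolate Finset.univ x (f ∘ x) with hP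
  have hinj : Set.InjOn x (Finset.univ : Finset (Fin (n+1))) := hx.injective.injOn
  have hdegP : P.natDegree ≤ n := by
    refine Polynomial.natDegree_le_iff_degree_le.mpr ?_
    have := Lagrange.degree_interpolate_le (f ∘ x) hinj
    simpa [hP] using this
  set g : ℕ → ℝ → ℝ := fun k t => iteratedDerivWithin k f s t - (derivative^[k] P).eval t with hg
  have hder : ∀ m < n, ∀ t ∈ s, HasDerivAt (g (0+m)) (g (0+m+1) t) t := by
    intro m hm t ht
    simp only [zero_add]
    have hdiff : DifferentiableAt ℝ (iteratedDerivWithin m f s) t :=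
      (hd m hm).differentiableAt (hopen.mem_nhds ht)
    have hval : deriv (iteratedDerivWithin m f s) t = iteratedDerivWithin (m+1) f s t := by
      rw [iteratedDerivWithin_succ,
        derivWithin_of_isOpen hopen ht]
    have h1 : HasDerivAt (iteratedDerivWithin m f s) (iteratedDerivWithin (m+1) f s t) t := by
      rw [← hval]; exact hdiff.hasDerivAt
    have h2 : HasDerivAt (fun u => (derivative^[m] P).eval u)
        ((derivative^[m+1] P).eval t) t := by
      rw [Function.iterate_succ_apply']
      exact Polynomial.hasDerivAt _ t
    exact h1.sub h2
  have hzero : ∀ i, g 0 (x i) = 0 := by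
    intro i
    simp only [hg, Function.iterate_zero, id_eq, iteratedDerivWithin_zero]
    rw [hP, Lagrange.eval_interpolate_at_node (f ∘ x) hinj (Finset.mem_univ i)]
    simp
  obtain ⟨ξ, hξ, hgξ⟩ := SLE.rolle_chain g n 0 hder x hx hmem hzero
  refine ⟨ξ, hξ, ?_⟩
  have : iteratedDerivWithin n f s ξ = (derivative^[n] P).eval ξ := by
    rw [zero_add] at hgξ
    have := hgξ
    simp only [hg] at this
    linarith
  rw [this, SLE.iterate_derivative_eval P hdegP ξ, hP,
    SLE.coeff_interpolate x hx.injective (f ∘ x)]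
  rfl

lemma SLE.exists_points {a b : ℝ} (E : Set ℝ) (hE : MeasurableSet E) (hEsub : E ⊆ Set.Ioo a b)
    {n : ℕ} (hn : 1 ≤ n) (c : Fin (n+1) → ℝ) (hc : StrictMono c)
    (hc01 : ∀ i, c i ∈ Set.Icc (0:ℝ) 1)
    (m' : ℝ) (hm'0 : 0 < m') (hm' : m' < (volume E).toReal) :
    ∃ x : Fin (n+1) → ℝ, StrictMono x ∧ (∀ i, x i ∈ E) ∧
      ∀ i j : Fin (n+1), j < i → (c i - c j) * m' ≤ x i - x j := by
  set mR := (volume E).toReal with hmR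
  have hfinIoo : volume (Set.Ioo a b) ≠ ⊤ := by
    rw [Real.volume_Ioo]; exact ENNReal.ofReal_ne_top
  have hfin : volume E ≠ ⊤ := fun h =>
    hfinIoo (top_le_iff.mp (h ▸ measure_mono hEsub))
  -- the "CDF" of E
  set F : ℝ → ℝ := fun t => (volume (E ∩ Set.Iio t)).toReal with hF
  have hfin' : ∀ S : Set ℝ, volume (E ∩ S) ≠ ⊤ := fun S h =>
    hfin (top_le_iff.mp (h ▸ measure_mono Set.inter_subset_left))
  have hsplit : ∀ u v : ℝ, u ≤ v →
      F v = F u + (volume (E ∩ Set.Ico u v)).toReal := by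
    intro u v huv
    have hun : E ∩ Set.Iio v = (E ∩ Set.Iio u) ∪ (E ∩ Set.Ico u v) := by
      rw [← Set.inter_union_distrib_left]
      congr 1
      ext t
      simp only [Set.mem_Iio, Set.mem_union, Set.mem_Ico]
      constructor
      · intro h; rcases lt_or_ge t u with h' | h'
        · exact Or.inl h'
        · exact Or.inr ⟨h', h⟩
      · rintro (h | ⟨_, h⟩) 
        · exact lt_of_lt_of_le h huv
        · exact h
    have hdisj : Disjoint (E ∩ Set.Iio u) (E ∩ Set.Ico u v) := by
      refine Set.disjoint_left.mpr ?_
      rintro t ⟨_, ht⟩ ⟨_, ht'⟩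
      exact absurd ht' (by simp [Set.mem_Ico]; intro h; exact absurd h (not_le.mpr ht))
    rw [hF]
    simp only
    rw [hun, measure_union hdisj (hE.inter measurableSet_Ico),
      ENNReal.toReal_add (hfin' _) (hfin' _)]
  have hmono : Monotone F := by
    intro u v huv
    rw [hsplit u v huv]
    have := ENNReal.toReal_nonneg (a := volume (E ∩ Set.Ico u v))
    linarith
  have hlip : ∀ u v : ℝ, u ≤ v → F v - F u ≤ v - u := by
    intro u v huv
    rw [hsplit u v huv]
    have h1 : (volume (E ∩ Set.Ico u v)).toReal ≤ (volume (Set.Ico u v)).toReal := by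
      refine ENNReal.toReal_mono ?_ (measure_mono Set.inter_subset_right)
      rw [Real.volume_Ico]; exact ENNReal.ofReal_ne_top
    rw [Real.volume_Ico] at h1
    have h2 : (ENNReal.ofReal (v - u)).toReal ≤ v - u := by
      rcases le_or_gt 0 (v-u) with h|h
      · rw [ENNReal.toReal_ofReal h]
      · rw [ENNReal.ofReal_of_nonpos h.le]; simp; linarith
    linarith
  have hcont : Continuous F := by
    refine (LipschitzWith.of_dist_le_mul (K := 1) (f := F) ?_).continuous
    intro u v
    have e : ((1:NNReal):ℝ) * dist u v = dist u v := by norm_num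
    rw [e, Real.dist_eq, Real.dist_eq, abs_le]
    rcases le_total u v with h | h
    · have h1 := hlip u v h
      have h2 := hmono h
      rw [abs_of_nonpos (by linarith : u - v ≤ 0)]
      constructor <;> linarith
    · have h1 := hlip v u h
      have h2 := hmono h
      rw [abs_of_nonneg (by linarith : 0 ≤ u - v)]
      constructor <;> linarith
  have hFa : F a = 0 := by
    have : E ∩ Set.Iio a = ∅ := by
      ext t; simp only [Set.mem_inter_iff, Set.mem_Iio, Set.mem_empty_iff_false, iff_false]
      rintro ⟨ht, ht'⟩
      exact absurd (hEsub ht).1 (not_lt.mpr (le_of_lt ht'))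
    rw [hF]; simp [this]
  have hFb : F b = mR := by
    have : E ∩ Set.Iio b = E := by
      rw [Set.inter_eq_left]; intro t ht; exact (hEsub ht).2
    rw [hF]; simp [this, hmR]
  have hab : a < b := by
    by_contra h
    have : E = ∅ := Set.eq_empty_of_subset_empty (by rwa [Set.Ioo_eq_empty (by exact h)] at hEsub)
    rw [hmR, this] at hm'
    simp at hm'
    linarith
  -- picking a point of E with F-value in a window
  have hpick : ∀ u v : ℝ, 0 ≤ u → u < v → v ≤ mR → ∃ x ∈ E, u ≤ F x ∧ F x ≤ v := by
    intro u v hu huv hv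
    have hmem : u ∈ Set.Icc (F a) (F b) := by rw [hFa, hFb]; exact ⟨hu, le_trans huv.le hv⟩
    have hmem' : v ∈ Set.Icc (F a) (F b) := by
      rw [hFa, hFb]; exact ⟨le_trans hu huv.le, hv⟩
    obtain ⟨y, _, hy⟩ := intermediate_value_Icc hab.le hcont.continuousOn hmem
    obtain ⟨y', _, hy'⟩ := intermediate_value_Icc hab.le hcont.continuousOn hmem'
    have hyy' : y ≤ y' := by
      by_contra h
      have := hmono (le_of_lt (not_le.mp h))
      rw [hy, hy'] at this
      linarith
    have hpos : volume (E ∩ Set.Ico y y') ≠ 0 := by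
      intro h0
      have := hsplit y y' hyy'
      rw [hy, hy', h0] at this
      simp at this
      linarith
    obtain ⟨x, hxE, hxy, hxy'⟩ := MeasureTheory.nonempty_of_measure_ne_zero hpos
    exact ⟨x, hxE, by rw [← hy]; exact hmono hxy, by rw [← hy']; exact hmono (le_of_lt hxy')⟩
  -- gap parameters
  have hnemp : (Finset.univ : Finset (Fin n)).Nonempty := ⟨⟨0, by omega⟩, Finset.mem_univ _⟩
  set g : ℝ := Finset.univ.inf' hnemp (fun i : Fin n => c i.succ - c i.castSucc) with hg
  have hgpos : 0 < g := by
    rw [hg]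
    rw [Finset.lt_inf'_iff]
    intro i _
    have := hc (Fin.castSucc_lt_succ (i := i))
    linarith
  set m₂ : ℝ := (m' + mR) / 2 with hm₂
  have hm₂1 : m' < m₂ := by rw [hm₂]; linarith
  have hm₂2 : m₂ < mR := by rw [hm₂]; linarith
  set ε : ℝ := min (mR - m₂) ((m₂ - m') * g) / 2 with hε
  have hεpos : 0 < ε := by
    rw [hε]
    have h1 : 0 < (m₂ - m') * g := by
      apply mul_pos <;> linarith
    have h2 : 0 < mR - m₂ := by linarith
    have := lt_min h2 h1
    linarith [min_le_left (mR - m₂) ((m₂ - m') * g)]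
  have hε1 : ε ≤ (mR - m₂) := by
    rw [hε]
    have := min_le_left (mR - m₂) ((m₂ - m') * g)
    linarith
  have hε2 : ε < (m₂ - m') * g := by
    rw [hε]
    have := min_le_right (mR - m₂) ((m₂ - m') * g)
    have : 0 < (m₂ - m') * g := by apply mul_pos <;> linarith
    linarith [min_le_right (mR - m₂) ((m₂ - m') * g)]
  have hm₂pos : 0 < m₂ := by linarith
  -- choose the points
  have hchoice : ∀ i : Fin (n+1), ∃ x ∈ E, c i * m₂ ≤ F x ∧ F x ≤ c i * m₂ + ε := by
    intro i
    have h0 : 0 ≤ c i * m₂ := mul_nonneg (hc01 i).1 hm₂pos.le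
    have h1 : c i * m₂ < c i * m₂ + ε := by linarith
    have h2 : c i * m₂ + ε ≤ mR := by
      have : c i * m₂ ≤ m₂ := by
        have := (hc01 i).2
        nlinarith
      linarith
    exact hpick _ _ h0 h1 h2
  choose x hxE hxl hxu using hchoice
  -- gap bound on F values
  have hgap : ∀ i j : Fin (n+1), j < i → g ≤ c i - c j := by
    intro i j hji
    have hjn : (j : ℕ) < n := by
      have h1 : (j:ℕ) < (i:ℕ) := hji
      have h2 : (i:ℕ) ≤ n := by omega
      omega
    set jj : Fin n := ⟨(j:ℕ), hjn⟩ with hjj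
    have h1 : g ≤ c jj.succ - c jj.castSucc :=
      Finset.inf'_le _ (Finset.mem_univ jj)
    have h2 : c jj.castSucc = c j := by
      congr 1
    have h3 : c jj.succ ≤ c i := by
      refine hc.monotone ?_
      rw [Fin.le_def]
      have : (jj.succ : ℕ) = (j:ℕ) + 1 := rfl
      rw [this]
      exact hji
    linarith
  have hFgap : ∀ i j : Fin (n+1), j < i → (c i - c j) * m' < F (x i) - F (x j) := by
    intro i j hji
    have h1 := hxl i
    have h2 := hxu j
    have hg' := hgap i j hji
    have hcij : c j < c i := hc hji
    nlinarith
  have hxgap : ∀ i j : Fin (n+1), j < i → (c i - c j) * m' ≤ x i - x j := by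
    intro i j hji
    have h1 := hFgap i j hji
    have hcij : c j < c i := hc hji
    have hxji : x j ≤ x i := by
      by_contra h
      have := hmono (le_of_lt (not_le.mp h))
      nlinarith
    have := hlip (x j) (x i) hxji
    linarith
  refine ⟨x, ?_, hxE, hxgap⟩
  intro i j hij
  have h := hxgap j i hij
  have hcij : c i < c j := hc hij
  nlinarith

theorem sublevel_set_estimate (a b lam α : ℝ) (n : ℕ) (hn : 1 ≤ n) (f : ℝ → ℝ)
    (hd : ∀ k < n, DifferentiableOn ℝ (iteratedDerivWithin k f (Set.Ioo a b)) (Set.Ioo a b))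
    (hlam : 0 < lam) (hα : 0 ≤ α)
    (hf : ∀ x ∈ Set.Ioo a b, lam ≤ |iteratedDerivWithin n f (Set.Ioo a b) x|) :
    (MeasureTheory.volume {x ∈ Set.Ioo a b | |f x| ≤ α}).toReal ≤
      ((n.factorial : ℝ) * 2 ^ (2 * n - 1)) ^ ((1 : ℝ) / n) * (α / lam) ^ ((1 : ℝ) / n) := by
  set s := Set.Ioo a b with hs
  set E := {x ∈ Set.Ioo a b | |f x| ≤ α} with hE
  have hRHS : 0 ≤ ((n.factorial : ℝ) * 2 ^ (2 * n - 1)) ^ ((1 : ℝ) / n)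
      * (α / lam) ^ ((1 : ℝ) / n) := by positivity
  -- f is continuous on s
  have hf0 : DifferentiableOn ℝ f s := by
    have h := hd 0 (by omega)
    rwa [iteratedDerivWithin_zero] at h
  have hcont : ContinuousOn f s := hf0.continuousOn
  -- E is measurable
  have hEsub : E ⊆ s := fun t ht => ht.1
  have hEmeas : MeasurableSet E := by
    have hU : IsOpen (s ∩ (fun t => |f t|) ⁻¹' Set.Ioi α) :=
      (hcont.abs).isOpen_inter_preimage isOpen_Ioo isOpen_Ioi
    have hEeq : E = s \ (s ∩ (fun t => |f t|) ⁻¹' Set.Ioi α) := by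
      ext t
      simp only [hE, Set.mem_setOf_eq, Set.mem_diff, Set.mem_inter_iff, Set.mem_preimage,
        Set.mem_Ioi, not_and, not_lt]
      constructor
      · rintro ⟨ht, hft⟩; exact ⟨ht, fun _ => hft⟩
      · rintro ⟨ht, hft⟩; exact ⟨ht, hft ht⟩
    rw [hEeq]
    exact measurableSet_Ioo.diff hU.measurableSet
  set mR := (volume E).toReal with hmR
  rcases le_or_gt mR 0 with hmR0 | hmR0
  · exact le_trans hmR0 hRHS
  -- main estimate for every m' < mR
  have key : ∀ m' : ℝ, 0 < m' → m' < mR → m' ^ n * lam ≤ (n.factorial : ℝ) * 2 ^ (2*n - 1) * α := by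
    intro m' hm'0 hm'
    obtain ⟨x, hxmono, hxE, hxgap⟩ := SLE.exists_points E hEmeas hEsub hn (SLE.cheb n)
      (SLE.cheb_strictMono hn) (fun i => SLE.cheb_mem i) m' hm'0 hm'
    obtain ⟨ξ, hξ, hMVT⟩ := SLE.divDiff_MVT a b n f hd x hxmono (fun i => hEsub (hxE i))
    have hlam' : lam ≤ (n.factorial : ℝ) *
        |∑ i, f (x i) * (∏ j ∈ Finset.univ.erase i, (x i - x j))⁻¹| := by
      have := hf ξ hξ
      rw [hMVT, abs_mul, abs_of_nonneg (by positivity : (0:ℝ) ≤ (n.factorial : ℝ))] at this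
      exact this
    -- bound each term
    have hfac : ∀ i : Fin (n+1), m' ^ n * ∏ j ∈ Finset.univ.erase i, |SLE.cheb n i - SLE.cheb n j|
        ≤ ∏ j ∈ Finset.univ.erase i, |x i - x j| := by
      intro i
      have heq : ∏ j ∈ Finset.univ.erase i, (m' * |SLE.cheb n i - SLE.cheb n j|)
          = m' ^ n * ∏ j ∈ Finset.univ.erase i, |SLE.cheb n i - SLE.cheb n j| := by
        rw [Finset.prod_mul_distrib, Finset.prod_const, Finset.card_erase_of_mem (Finset.mem_univ i),
          Finset.card_univ, Fintype.card_fin]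
        norm_num
      rw [← heq]
      refine Finset.prod_le_prod (fun j _ => by positivity) ?_
      intro j hj
      have hij : j ≠ i := (Finset.mem_erase.mp hj).1
      rcases lt_or_gt_of_ne hij with hlt | hgt
      · -- j < i
        have h1 := hxgap i j hlt
        have h2 : SLE.cheb n j < SLE.cheb n i := SLE.cheb_strictMono hn hlt
        rw [abs_of_pos (by linarith)]
        calc m' * (SLE.cheb n i - SLE.cheb n j) ≤ x i - x j := by linarith
        _ ≤ |x i - x j| := le_abs_self _
      · -- i < j
        have h1 := hxgap j i hgt
        have h2 : SLE.cheb n i < SLE.cheb n j := SLE.cheb_strictMono hn hgt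
        rw [abs_of_neg (by linarith), abs_sub_comm]
        calc m' * -(SLE.cheb n i - SLE.cheb n j) ≤ x j - x i := by linarith
        _ ≤ |x j - x i| := le_abs_self _
    have hsum : |∑ i, f (x i) * (∏ j ∈ Finset.univ.erase i, (x i - x j))⁻¹|
        ≤ α * (m' ^ n)⁻¹ * 2 ^ (2*n - 1) := by
      calc |∑ i, f (x i) * (∏ j ∈ Finset.univ.erase i, (x i - x j))⁻¹|
          ≤ ∑ i, |f (x i) * (∏ j ∈ Finset.univ.erase i, (x i - x j))⁻¹| :=
            Finset.abs_sum_le_sum_abs _ _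
        _ ≤ ∑ i, α * (m' ^ n)⁻¹ * (∏ j ∈ Finset.univ.erase i, |SLE.cheb n i - SLE.cheb n j|)⁻¹ := by
            refine Finset.sum_le_sum fun i _ => ?_
            rw [abs_mul, abs_inv, Finset.abs_prod]
            have hfα : |f (x i)| ≤ α := (hxE i).2
            have hpos : 0 < ∏ j ∈ Finset.univ.erase i, |x i - x j| :=
              SLE.prod_abs_pos x hxmono i
            have hposc : 0 < ∏ j ∈ Finset.univ.erase i, |SLE.cheb n i - SLE.cheb n j| :=
              SLE.prod_abs_pos _ (SLE.cheb_strictMono hn) i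
            have hinv : (∏ j ∈ Finset.univ.erase i, |x i - x j|)⁻¹
                ≤ (m' ^ n * ∏ j ∈ Finset.univ.erase i, |SLE.cheb n i - SLE.cheb n j|)⁻¹ := by
              refine inv_anti₀ (by positivity) (hfac i)
            calc |f (x i)| * (∏ j ∈ Finset.univ.erase i, |x i - x j|)⁻¹
                ≤ α * (m' ^ n * ∏ j ∈ Finset.univ.erase i, |SLE.cheb n i - SLE.cheb n j|)⁻¹ :=
                  mul_le_mul hfα hinv (by positivity) hα
              _ = α * (m' ^ n)⁻¹ * (∏ j ∈ Finset.univ.erase i, |SLE.cheb n i - SLE.cheb n j|)⁻¹ := by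
                  rw [mul_inv]; ring
        _ = α * (m' ^ n)⁻¹ * 2 ^ (2*n - 1) := by
            rw [← Finset.mul_sum, SLE.cheb_sum hn]
    have hm'n : (0:ℝ) < m' ^ n := by positivity
    have hchain : lam ≤ (n.factorial : ℝ) * (α * (m' ^ n)⁻¹ * 2 ^ (2*n - 1)) := by
      refine le_trans hlam' ?_
      exact mul_le_mul_of_nonneg_left hsum (by positivity)
    have := mul_le_mul_of_nonneg_left hchain hm'n.le
    calc m' ^ n * lam ≤ m' ^ n * ((n.factorial : ℝ) * (α * (m' ^ n)⁻¹ * 2 ^ (2*n - 1))) := this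
      _ = (n.factorial : ℝ) * 2 ^ (2*n - 1) * α := by
          field_simp
  -- pass to the limit m' → mR
  have hlimit : mR ^ n * lam ≤ (n.factorial : ℝ) * 2 ^ (2*n - 1) * α := by
    have htend : Filter.Tendsto (fun m' : ℝ => m' ^ n * lam) (nhdsWithin mR (Set.Iio mR))
        (nhds (mR ^ n * lam)) := by
      exact (((continuous_pow n).mul continuous_const).tendsto mR).mono_left nhdsWithin_le_nhds
    refine le_of_tendsto htend ?_
    have hmem : Set.Ioo 0 mR ∈ nhdsWithin mR (Set.Iio mR) :=
      Ioo_mem_nhdsLT_of_mem ⟨hmR0, le_refl mR⟩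
    filter_upwards [hmem] with m' hm'
    exact key m' hm'.1 hm'.2
  -- conclude via rpow
  have hD : mR ^ n ≤ ((n.factorial : ℝ) * 2 ^ (2*n - 1)) * (α / lam) := by
    rw [mul_div_assoc'] at *
    rw [le_div_iff₀ hlam]
    exact hlimit
  have hn0 : (n:ℝ) ≠ 0 := by positivity
  calc mR = (mR ^ n) ^ ((1:ℝ)/n) := by
        rw [← Real.rpow_natCast mR n, ← Real.rpow_mul (by positivity), mul_one_div,
          div_self hn0, Real.rpow_one]
    _ ≤ (((n.factorial : ℝ) * 2 ^ (2*n - 1)) * (α / lam)) ^ ((1:ℝ)/n) :=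
        Real.rpow_le_rpow (by positivity) hD (by positivity)
    _ = ((n.factorial : ℝ) * 2 ^ (2 * n - 1)) ^ ((1 : ℝ) / n) * (α / lam) ^ ((1 : ℝ) / n) :=
        Real.mul_rpow (by positivity) (by positivity)
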